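/- Let n ≥ 1, a ∈ {0,1}^{n-1}, and P_a the digital net as above with N = 2^n points. Define the discrepancy function Δ(t_1,t_2) = (1/N)·#{z ∈ P_a : z_1 < t_1 and z_2 < t_2} − t_1 t_2 for (t_1,t_2) ∈ [0,1]^2. Then ∫_{[0,1]^2} Δ(t_1,t_2) dt_1 dt_2 = (h + 5)/2^{n+3} + 1/2^{2n+2}, where h = #{i ∈ {1,…,n-1} : a_i = 0}. -/

import Mathlib

open Finset MeasureTheory

def bvec (n : ℕ) (a : Fin (n-1) → ZMod 2) (t : Fin n → ZMod 2) (k : Fin n) : ZMod 2 :=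
  t k + (if h : (k : ℕ) < n - 1 then a ⟨k, h⟩ else 0) *
    ∑ i ∈ Finset.univ.filter (fun i : Fin n => k < i), t i

noncomputable def xcoord (n : ℕ) (t : Fin n → ZMod 2) : ℝ :=
  ∑ k : Fin n, ((t k).val : ℝ) / 2 ^ (n - (k : ℕ))

noncomputable def ycoord (n : ℕ) (a : Fin (n-1) → ZMod 2) (t : Fin n → ZMod 2) : ℝ :=
  ∑ k : Fin n, ((bvec n a t k).val : ℝ) / 2 ^ ((k : ℕ) + 1)

noncomputable def epsz (v : ZMod 2) : ℝ := 1 - 2 * (v.val : ℝ)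

lemma zmod2_cases (v : ZMod 2) : v = 0 ∨ v = 1 := by revert v; decide

lemma epsz_zero : epsz 0 = 1 := by simp [epsz]

lemma epsz_one : epsz 1 = -1 := by
  have : (1 : ZMod 2).val = 1 := rfl
  norm_num [epsz, this]

lemma epsz_add (u v : ZMod 2) : epsz (u + v) = epsz u * epsz v := by
  rcases zmod2_cases u with hu | hu <;> rcases zmod2_cases v with hv | hv <;>
    subst hu <;> subst hv <;>
    simp [epsz_zero, epsz_one, show (1 + 1 : ZMod 2) = 0 by decide]

lemma val_eq_epsz (v : ZMod 2) : ((v.val : ℝ)) = (1 - epsz v) / 2 := by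
  unfold epsz; ring

lemma sum_epsz {n : ℕ} (f : (Fin n → ZMod 2) → ZMod 2) (j : Fin n)
    (hf : ∀ t, f (Function.update t j (t j + 1)) = f t + 1) :
    ∑ t : Fin n → ZMod 2, epsz (f t) = 0 := by
  have hinv : Function.Involutive
      (fun t : Fin n → ZMod 2 => Function.update t j (t j + 1)) := by
    intro t
    funext i
    rcases eq_or_ne i j with rfl | hi
    · simp [show ∀ x : ZMod 2, x + 1 + 1 = x by decide]
    · simp [Function.update_of_ne hi]
  have h1 : ∑ t : Fin n → ZMod 2, epsz (f (Function.update t j (t j + 1)))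
      = ∑ t : Fin n → ZMod 2, epsz (f t) :=
    Function.Bijective.sum_comp hinv.bijective (fun t => epsz (f t))
  have h2 : ∑ t : Fin n → ZMod 2, epsz (f (Function.update t j (t j + 1)))
      = -∑ t : Fin n → ZMod 2, epsz (f t) := by
    rw [← Finset.sum_neg_distrib]
    refine Finset.sum_congr rfl fun t _ => ?_
    rw [hf t, epsz_add, epsz_one]; ring
  have := h1.symm.trans h2
  linarith

lemma card_fun2 (n : ℕ) : ∑ _t : Fin n → ZMod 2, (1 : ℝ) = 2 ^ n := by
  rw [Finset.sum_const, Finset.card_univ]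
  simp [Fintype.card_fun]

lemma sum_val {n : ℕ} (f : (Fin n → ZMod 2) → ZMod 2)
    (hf : ∑ t : Fin n → ZMod 2, epsz (f t) = 0) :
    ∑ t : Fin n → ZMod 2, ((f t).val : ℝ) = 2 ^ n / 2 := by
  calc ∑ t : Fin n → ZMod 2, ((f t).val : ℝ)
      = ∑ t : Fin n → ZMod 2, (1 - epsz (f t)) / 2 := by
        refine Finset.sum_congr rfl fun t _ => val_eq_epsz _
    _ = ((∑ _t : Fin n → ZMod 2, (1:ℝ)) - ∑ t : Fin n → ZMod 2, epsz (f t)) / 2 := by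
        rw [← Finset.sum_div, Finset.sum_sub_distrib]
    _ = 2 ^ n / 2 := by rw [hf, card_fun2]; ring

lemma sum_val_mul {n : ℕ} (f g : (Fin n → ZMod 2) → ZMod 2)
    (hf : ∑ t : Fin n → ZMod 2, epsz (f t) = 0)
    (hg : ∑ t : Fin n → ZMod 2, epsz (g t) = 0)
    (hfg : ∑ t : Fin n → ZMod 2, epsz (f t + g t) = 0) :
    ∑ t : Fin n → ZMod 2, ((f t).val : ℝ) * ((g t).val : ℝ) = 2 ^ n / 4 := by
  calc ∑ t : Fin n → ZMod 2, ((f t).val : ℝ) * ((g t).val : ℝ)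
      = ∑ t : Fin n → ZMod 2,
          ((1:ℝ) - epsz (f t) - epsz (g t) + epsz (f t + g t)) / 4 := by
        refine Finset.sum_congr rfl fun t _ => ?_
        rw [val_eq_epsz, val_eq_epsz, epsz_add]; ring
    _ = ((∑ _t : Fin n → ZMod 2, (1:ℝ)) - (∑ t : Fin n → ZMod 2, epsz (f t))
          - (∑ t : Fin n → ZMod 2, epsz (g t))
          + ∑ t : Fin n → ZMod 2, epsz (f t + g t)) / 4 := by
        rw [← Finset.sum_div, Finset.sum_add_distrib, Finset.sum_sub_distrib,
          Finset.sum_sub_distrib]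
    _ = 2 ^ n / 4 := by rw [hf, hg, hfg, card_fun2]; ring

section bvecLemmas

variable {n : ℕ} (a : Fin (n-1) → ZMod 2)

lemma bvec_update_self (t : Fin n → ZMod 2) (l : Fin n) :
    bvec n a (Function.update t l (t l + 1)) l = bvec n a t l + 1 := by
  unfold bvec
  have hs : ∑ i ∈ Finset.univ.filter (fun i : Fin n => l < i),
        Function.update t l (t l + 1) i
      = ∑ i ∈ Finset.univ.filter (fun i : Fin n => l < i), t i := by
    refine Finset.sum_congr rfl fun i hi => ?_
    simp only [Finset.mem_filter] at hi
    exact Function.update_of_ne hi.2.ne' _ _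
  rw [hs, Function.update_self]
  ring

lemma bvec_update_lt (t : Fin n → ZMod 2) (l j : Fin n) (hj : j < l) (x : ZMod 2) :
    bvec n a (Function.update t j x) l = bvec n a t l := by
  unfold bvec
  have hs : ∑ i ∈ Finset.univ.filter (fun i : Fin n => l < i),
        Function.update t j x i
      = ∑ i ∈ Finset.univ.filter (fun i : Fin n => l < i), t i := by
    refine Finset.sum_congr rfl fun i hi => ?_
    simp only [Finset.mem_filter] at hi
    exact Function.update_of_ne (hj.trans hi.2).ne' _ _
  rw [hs, Function.update_of_ne hj.ne' _ _]

lemma bvec_update_succ (t : Fin n → ZMod 2) (l : Fin n) (hl : (l : ℕ) < n - 1)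
    (hal : a ⟨l, hl⟩ = 1) :
    bvec n a (Function.update t ⟨(l:ℕ)+1, by omega⟩
        (t ⟨(l:ℕ)+1, by omega⟩ + 1)) l = bvec n a t l + 1 := by
  set j : Fin n := ⟨(l:ℕ)+1, by omega⟩ with hj
  have hlj : l < j := by simp [hj, Fin.lt_def]
  have hjmem : j ∈ Finset.univ.filter (fun i : Fin n => l < i) := by
    simp [Finset.mem_filter, hlj]
  unfold bvec
  have hs : ∑ i ∈ Finset.univ.filter (fun i : Fin n => l < i),
        Function.update t j (t j + 1) i
      = (∑ i ∈ Finset.univ.filter (fun i : Fin n => l < i), t i) + 1 := by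
    rw [← Finset.add_sum_erase _ _ hjmem, ← Finset.add_sum_erase _ t hjmem,
      Function.update_self]
    have herase : ∑ i ∈ (Finset.univ.filter (fun i : Fin n => l < i)).erase j,
          Function.update t j (t j + 1) i
        = ∑ i ∈ (Finset.univ.filter (fun i : Fin n => l < i)).erase j, t i := by
      refine Finset.sum_congr rfl fun i hi => ?_
      exact Function.update_of_ne (Finset.ne_of_mem_erase hi) _ _
    rw [herase]
    ring
  rw [hs, Function.update_of_ne hlj.ne _ _]
  rw [dif_pos hl, hal]
  ring

end bvecLemmas

lemma intInt_ind (z : ℝ) :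
    IntervalIntegrable (fun t : ℝ => if z < t then (1:ℝ) else 0) volume 0 1 := by
  apply Monotone.intervalIntegrable
  intro s s' hss'
  by_cases h1 : z < s
  · simp [h1, lt_of_lt_of_le h1 hss']
  · by_cases h2 : z < s' <;> simp [h1, h2]

lemma integral_ind (z : ℝ) (h0 : 0 ≤ z) (h1 : z ≤ 1) :
    ∫ t in (0:ℝ)..1, (if z < t then (1:ℝ) else 0) = 1 - z := by
  have heq : (fun t : ℝ => if z < t then (1:ℝ) else 0)
      = Set.indicator (Set.Ioi z) (fun _ => (1:ℝ)) := by
    funext t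
    by_cases h : z < t <;> simp [Set.indicator, Set.mem_Ioi, h]
  rw [heq, intervalIntegral.integral_of_le zero_le_one,
    MeasureTheory.setIntegral_indicator measurableSet_Ioi]
  have hset : Set.Ioc (0:ℝ) 1 ∩ Set.Ioi z = Set.Ioc z 1 := by
    ext t
    simp only [Set.mem_inter_iff, Set.mem_Ioc, Set.mem_Ioi]
    constructor
    · rintro ⟨⟨_, ht1⟩, htz⟩; exact ⟨htz, ht1⟩
    · rintro ⟨htz, ht1⟩; exact ⟨⟨lt_of_le_of_lt h0 htz, ht1⟩, htz⟩
  rw [hset, MeasureTheory.setIntegral_const, Measure.real, Real.volume_Ioc, smul_eq_mul, mul_one,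
    ENNReal.toReal_ofReal (by linarith)]
lemma val_le_one (v : ZMod 2) : ((v.val : ℝ)) ≤ 1 := by
  have h := ZMod.val_lt v
  have : v.val ≤ 1 := by omega
  exact_mod_cast this

lemma val_nonneg' (v : ZMod 2) : (0:ℝ) ≤ (v.val : ℝ) := by positivity

lemma sum_w (n : ℕ) : ∑ k : Fin n, (1:ℝ) / 2 ^ (n - (k:ℕ)) = 1 - 1 / 2 ^ n := by
  have h1 : ∀ k : Fin n, (1:ℝ) / 2 ^ (n - (k:ℕ)) = 2 ^ (k:ℕ) / 2 ^ n := by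
    intro k
    rw [div_eq_div_iff (by positivity) (by positivity), one_mul, ← pow_add]
    congr 1
    omega
  rw [Finset.sum_congr rfl fun k _ => h1 k, ← Finset.sum_div,
    Fin.sum_univ_eq_sum_range (fun i => (2:ℝ)^i), geom_sum_eq (by norm_num : (2:ℝ) ≠ 1)]
  have h2 : (0:ℝ) < 2 ^ n := by positivity
  rw [show (2:ℝ) - 1 = 1 by norm_num, div_one, sub_div, div_self h2.ne']

lemma sum_u (n : ℕ) : ∑ l : Fin n, (1:ℝ) / 2 ^ ((l:ℕ) + 1) = 1 - 1 / 2 ^ n := by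
  have h1 : ∀ l : Fin n, (1:ℝ) / 2 ^ ((l:ℕ) + 1) = ((1:ℝ)/2) ^ (l:ℕ) * (1/2) := by
    intro l
    rw [div_pow, one_pow, pow_succ]
    ring
  rw [Finset.sum_congr rfl fun l _ => h1 l, ← Finset.sum_mul,
    Fin.sum_univ_eq_sum_range (fun i => ((1:ℝ)/2)^i),
    geom_sum_eq (by norm_num : (1:ℝ)/2 ≠ 1)]
  have : (0:ℝ) < 2 ^ n := by positivity
  rw [div_pow, one_pow]
  field_simp
  ring

lemma xcoord_nonneg (n : ℕ) (t : Fin n → ZMod 2) : 0 ≤ xcoord n t := by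
  unfold xcoord; positivity

lemma xcoord_le_one (n : ℕ) (t : Fin n → ZMod 2) : xcoord n t ≤ 1 := by
  unfold xcoord
  calc ∑ k : Fin n, ((t k).val : ℝ) / 2 ^ (n - (k : ℕ))
      ≤ ∑ k : Fin n, (1:ℝ) / 2 ^ (n - (k : ℕ)) := by
        refine Finset.sum_le_sum fun k _ => ?_
        gcongr
        exact val_le_one _
    _ = 1 - 1/2^n := sum_w n
    _ ≤ 1 := by
        have h2 : (0:ℝ) < 2 ^ n := by positivity
        have h3 : (0:ℝ) < 1/2^n := by positivity
        linarith
lemma ycoord_nonneg (n : ℕ) (a : Fin (n-1) → ZMod 2) (t : Fin n → ZMod 2) :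
    0 ≤ ycoord n a t := by
  unfold ycoord; positivity

lemma ycoord_le_one (n : ℕ) (a : Fin (n-1) → ZMod 2) (t : Fin n → ZMod 2) :
    ycoord n a t ≤ 1 := by
  unfold ycoord
  calc ∑ k : Fin n, ((bvec n a t k).val : ℝ) / 2 ^ ((k:ℕ) + 1)
      ≤ ∑ k : Fin n, (1:ℝ) / 2 ^ ((k:ℕ) + 1) := by
        refine Finset.sum_le_sum fun k _ => ?_
        gcongr
        exact val_le_one _
    _ = 1 - 1/2^n := sum_u n
    _ ≤ 1 := by
        have h3 : (0:ℝ) < 1/2^n := by positivity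
        linarith

set_option maxHeartbeats 1000000 in
lemma inner_int (n : ℕ) (a : Fin (n-1) → ZMod 2) (t₁ : ℝ) :
    (∫ t₂ in (0:ℝ)..1,
        (((Finset.univ.filter
            (fun t : Fin n → ZMod 2 => xcoord n t < t₁ ∧ ycoord n a t < t₂)).card : ℝ) / 2 ^ n
          - t₁ * t₂))
      = (∑ t : Fin n → ZMod 2, (if xcoord n t < t₁ then 1 - ycoord n a t else 0)) / 2 ^ n
        - t₁ / 2 := by
  have hcard : ∀ t₂ : ℝ, ((Finset.univ.filter
          (fun t : Fin n → ZMod 2 => xcoord n t < t₁ ∧ ycoord n a t < t₂)).card : ℝ)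
      = ∑ t : Fin n → ZMod 2,
          (if xcoord n t < t₁ then (if ycoord n a t < t₂ then (1:ℝ) else 0) else 0) := by
    intro t₂
    rw [Finset.card_filter]
    push_cast
    refine Finset.sum_congr rfl fun t _ => ?_
    by_cases h1 : xcoord n t < t₁ <;> by_cases h2 : ycoord n a t < t₂ <;> simp [h1, h2]
  have hint : ∀ t : Fin n → ZMod 2, IntervalIntegrable
      (fun t₂ : ℝ => (if xcoord n t < t₁ then (if ycoord n a t < t₂ then (1:ℝ) else 0) else 0))
      volume 0 1 := by
    intro t
    by_cases h1 : xcoord n t < t₁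
    · simpa [h1] using intInt_ind (ycoord n a t)
    · simp [h1]
  have hintsum : IntervalIntegrable (fun t₂ : ℝ => (∑ t : Fin n → ZMod 2,
        (if xcoord n t < t₁ then (if ycoord n a t < t₂ then (1:ℝ) else 0) else 0)) / 2 ^ n)
      volume 0 1 := by
    have hs := IntervalIntegrable.sum (μ := volume) (a := (0:ℝ)) (b := 1) Finset.univ
      (f := fun (t : Fin n → ZMod 2) (t₂ : ℝ) =>
        (if xcoord n t < t₁ then (if ycoord n a t < t₂ then (1:ℝ) else 0) else 0))
      (fun t _ => hint t)
    have h0 : (fun t₂ : ℝ => ∑ t : Fin n → ZMod 2,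
          (if xcoord n t < t₁ then (if ycoord n a t < t₂ then (1:ℝ) else 0) else 0))
        = (∑ t : Fin n → ZMod 2, fun t₂ : ℝ =>
          (if xcoord n t < t₁ then (if ycoord n a t < t₂ then (1:ℝ) else 0) else 0)) := by
      funext t₂
      rw [Finset.sum_apply]
    have hs2 : IntervalIntegrable (fun t₂ : ℝ => ∑ t : Fin n → ZMod 2,
          (if xcoord n t < t₁ then (if ycoord n a t < t₂ then (1:ℝ) else 0) else 0))
        volume 0 1 := by
      rw [h0]; exact hs
    exact hs2.div_const _
  have hstep : ∀ t₂ : ℝ, ((Finset.univ.filter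
          (fun t : Fin n → ZMod 2 => xcoord n t < t₁ ∧ ycoord n a t < t₂)).card : ℝ) / 2 ^ n
          - t₁ * t₂
      = (∑ t : Fin n → ZMod 2,
          (if xcoord n t < t₁ then (if ycoord n a t < t₂ then (1:ℝ) else 0) else 0)) / 2 ^ n
          - t₁ * t₂ := by
    intro t₂; rw [hcard]
  rw [intervalIntegral.integral_congr (fun t₂ _ => hstep t₂)]
  rw [intervalIntegral.integral_sub hintsum (by
    apply IntervalIntegrable.const_mul
    exact intervalIntegral.intervalIntegrable_id)]
  rw [intervalIntegral.integral_div, intervalIntegral.integral_finset_sum (fun (t : Fin n → ZMod 2) _ => hint t)]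
  rw [intervalIntegral.integral_const_mul, integral_id]
  have hsum : (∑ t : Fin n → ZMod 2, ∫ t₂ in (0:ℝ)..1,
        (if xcoord n t < t₁ then (if ycoord n a t < t₂ then (1:ℝ) else 0) else 0))
      = ∑ t : Fin n → ZMod 2, (if xcoord n t < t₁ then 1 - ycoord n a t else 0) := by
    refine Finset.sum_congr rfl fun t _ => ?_
    by_cases h1 : xcoord n t < t₁
    · simp only [h1, if_true]
      exact integral_ind _ (ycoord_nonneg n a t) (ycoord_le_one n a t)
    · simp [h1]
  rw [hsum]
  norm_num
  ring
set_option maxHeartbeats 1000000 in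
lemma outer_int (n : ℕ) (a : Fin (n-1) → ZMod 2) :
    (∫ t₁ in (0:ℝ)..1,
        ((∑ t : Fin n → ZMod 2, (if xcoord n t < t₁ then 1 - ycoord n a t else 0)) / 2 ^ n
          - t₁ / 2))
      = (∑ t : Fin n → ZMod 2, (1 - ycoord n a t) * (1 - xcoord n t)) / 2 ^ n - 1 / 4 := by
  have hrw : ∀ (t₁ : ℝ) (t : Fin n → ZMod 2),
      (if xcoord n t < t₁ then 1 - ycoord n a t else 0)
        = (1 - ycoord n a t) * (if xcoord n t < t₁ then (1:ℝ) else 0) := by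
    intro t₁ t
    by_cases h : xcoord n t < t₁ <;> simp [h]
  have hint : ∀ t : Fin n → ZMod 2, IntervalIntegrable
      (fun t₁ : ℝ => (1 - ycoord n a t) * (if xcoord n t < t₁ then (1:ℝ) else 0))
      volume 0 1 := fun t => (intInt_ind (xcoord n t)).const_mul _
  have hstep : ∀ t₁ : ℝ,
      (∑ t : Fin n → ZMod 2, (if xcoord n t < t₁ then 1 - ycoord n a t else 0)) / 2 ^ n
          - t₁ / 2
      = (∑ t : Fin n → ZMod 2,
          (1 - ycoord n a t) * (if xcoord n t < t₁ then (1:ℝ) else 0)) / 2 ^ n - t₁ / 2 := by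
    intro t₁
    rw [Finset.sum_congr rfl fun t _ => hrw t₁ t]
  rw [intervalIntegral.integral_congr (fun t₁ _ => hstep t₁)]
  have hintsum : IntervalIntegrable (fun t₁ : ℝ => (∑ t : Fin n → ZMod 2,
        (1 - ycoord n a t) * (if xcoord n t < t₁ then (1:ℝ) else 0)) / 2 ^ n)
      volume 0 1 := by
    have hs := IntervalIntegrable.sum (μ := volume) (a := (0:ℝ)) (b := 1) Finset.univ
      (f := fun (t : Fin n → ZMod 2) (t₁ : ℝ) =>
        (1 - ycoord n a t) * (if xcoord n t < t₁ then (1:ℝ) else 0))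
      (fun t _ => hint t)
    have hs2 : IntervalIntegrable (fun t₁ : ℝ => ∑ t : Fin n → ZMod 2,
          (1 - ycoord n a t) * (if xcoord n t < t₁ then (1:ℝ) else 0)) volume 0 1 := by
      have h0 : (fun t₁ : ℝ => ∑ t : Fin n → ZMod 2,
            (1 - ycoord n a t) * (if xcoord n t < t₁ then (1:ℝ) else 0))
          = (∑ t : Fin n → ZMod 2, fun t₁ : ℝ =>
            (1 - ycoord n a t) * (if xcoord n t < t₁ then (1:ℝ) else 0)) := by
        funext t₁
        rw [Finset.sum_apply]
      rw [h0]; exact hs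
    exact hs2.div_const _
  rw [intervalIntegral.integral_sub hintsum (by
    have : (fun t₁ : ℝ => t₁ / 2) = fun t₁ : ℝ => t₁ * (1/2) := by funext t₁; ring
    rw [this]
    exact intervalIntegral.intervalIntegrable_id.mul_const _)]
  rw [intervalIntegral.integral_div,
    intervalIntegral.integral_finset_sum (fun (t : Fin n → ZMod 2) _ => hint t)]
  have hid : (∫ t₁ in (0:ℝ)..1, t₁ / 2) = 1/4 := by
    have : (fun t₁ : ℝ => t₁ / 2) = fun t₁ : ℝ => t₁ * (1/2) := by funext t₁; ring
    rw [this, intervalIntegral.integral_mul_const, integral_id]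
    norm_num
  rw [hid]
  have hsum : (∑ t : Fin n → ZMod 2, ∫ t₁ in (0:ℝ)..1,
        (1 - ycoord n a t) * (if xcoord n t < t₁ then (1:ℝ) else 0))
      = ∑ t : Fin n → ZMod 2, (1 - ycoord n a t) * (1 - xcoord n t) := by
    refine Finset.sum_congr rfl fun t _ => ?_
    rw [intervalIntegral.integral_const_mul,
      integral_ind _ (xcoord_nonneg n t) (xcoord_le_one n t)]
  rw [hsum]
lemma sum_x (n : ℕ) :
    ∑ t : Fin n → ZMod 2, xcoord n t = (2^n/2) * (1 - 1/2^n) := by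
  unfold xcoord
  rw [Finset.sum_comm]
  have h1 : ∀ k : Fin n, ∑ t : Fin n → ZMod 2, ((t k).val : ℝ) / 2 ^ (n - (k:ℕ))
      = (2^n/2) * ((1:ℝ)/2^(n-(k:ℕ))) := by
    intro k
    rw [← Finset.sum_div, sum_val (fun t => t k) (sum_epsz _ k (by intro t; simp))]
    ring
  rw [Finset.sum_congr rfl fun k _ => h1 k, ← Finset.mul_sum, sum_w]

lemma sum_y (n : ℕ) (a : Fin (n-1) → ZMod 2) :
    ∑ t : Fin n → ZMod 2, ycoord n a t = (2^n/2) * (1 - 1/2^n) := by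
  unfold ycoord
  rw [Finset.sum_comm]
  have h1 : ∀ l : Fin n, ∑ t : Fin n → ZMod 2, ((bvec n a t l).val : ℝ) / 2 ^ ((l:ℕ)+1)
      = (2^n/2) * ((1:ℝ)/2^((l:ℕ)+1)) := by
    intro l
    rw [← Finset.sum_div, sum_val (fun t => bvec n a t l)
      (sum_epsz _ l (fun t => bvec_update_self a t l))]
    ring
  rw [Finset.sum_congr rfl fun l _ => h1 l, ← Finset.mul_sum, sum_u]

lemma Pkl (n : ℕ) (a : Fin (n-1) → ZMod 2) (k l : Fin n) :
    ∑ t : Fin n → ZMod 2, ((t k).val : ℝ) * ((bvec n a t l).val : ℝ)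
      = 2^n/4 + (if k = l ∧ (if h : (l:ℕ) < n-1 then a ⟨l, h⟩ else 0) = 0
          then (2:ℝ)^n/4 else 0) := by
  by_cases hc : k = l ∧ (if h : (l:ℕ) < n-1 then a ⟨l, h⟩ else 0) = 0
  · rw [if_pos hc]
    obtain ⟨rfl, h0⟩ := hc
    have hb : ∀ t : Fin n → ZMod 2, bvec n a t k = t k := by
      intro t
      unfold bvec
      rw [h0]
      ring
    have hvv : ∀ t : Fin n → ZMod 2, ((t k).val : ℝ) * ((bvec n a t k).val : ℝ)
        = ((t k).val : ℝ) := by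
      intro t
      rw [hb t]
      rcases zmod2_cases (t k) with h | h <;> rw [h]
      · norm_num
      · rw [show (1 : ZMod 2).val = 1 from rfl]
        norm_num
    rw [Finset.sum_congr rfl fun t _ => hvv t,
      sum_val (fun t => t k) (sum_epsz _ k (by intro t; simp))]
    ring
  · rw [if_neg hc]
    rw [add_zero]
    apply sum_val_mul (fun t => t k) (fun t => bvec n a t l)
    · exact sum_epsz _ k (by intro t; simp)
    · exact sum_epsz _ l (fun t => bvec_update_self a t l)
    · rcases lt_trichotomy k l with h | h | h
      · refine sum_epsz _ k fun t => ?_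
        rw [bvec_update_lt a t l k h, Function.update_self]
        ring
      · subst h
        have hAl : (if h : (k:ℕ) < n-1 then a ⟨k, h⟩ else 0) ≠ 0 := fun h0 => hc ⟨rfl, h0⟩
        have hl : (k:ℕ) < n - 1 := by
          by_contra hl
          exact hAl (dif_neg hl)
        have hal : a ⟨k, hl⟩ = 1 := by
          rcases zmod2_cases (a ⟨k, hl⟩) with h | h
          · exact absurd (by rw [dif_pos hl, h]) hAl
          · exact h
        refine sum_epsz _ ⟨(k:ℕ)+1, by omega⟩ fun t => ?_
        rw [bvec_update_succ a t k hl hal,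
          Function.update_of_ne (Fin.ne_of_val_ne (show (k:ℕ) ≠ (k:ℕ)+1 by omega)) _ _]
        ring
      · refine sum_epsz _ l fun t => ?_
        rw [bvec_update_self a t l, Function.update_of_ne (Fin.ne_of_val_ne
          (by exact Nat.ne_of_gt h)) _ _]
        ring
lemma sum_xy (n : ℕ) (a : Fin (n-1) → ZMod 2) :
    ∑ t : Fin n → ZMod 2, xcoord n t * ycoord n a t
      = (2^n/4) * ((1 - 1/2^n) * (1 - 1/2^n))
        + (∑ l : Fin n,
            (if (if h : (l:ℕ) < n-1 then a ⟨l, h⟩ else 0) = 0 then (1:ℝ) else 0)) / 8 := by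
  have hexp : ∀ t : Fin n → ZMod 2, xcoord n t * ycoord n a t
      = ∑ k : Fin n, ∑ l : Fin n,
          (((t k).val : ℝ) / 2 ^ (n - (k:ℕ))) * (((bvec n a t l).val : ℝ) / 2 ^ ((l:ℕ)+1)) := by
    intro t
    rw [xcoord, ycoord, Finset.sum_mul_sum]
  rw [Finset.sum_congr rfl fun t _ => hexp t]
  rw [Finset.sum_comm]
  have hswap : ∀ k : Fin n, (∑ t : Fin n → ZMod 2, ∑ l : Fin n,
        (((t k).val : ℝ) / 2 ^ (n - (k:ℕ))) * (((bvec n a t l).val : ℝ) / 2 ^ ((l:ℕ)+1)))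
      = ∑ l : Fin n, ∑ t : Fin n → ZMod 2,
        (((t k).val : ℝ) / 2 ^ (n - (k:ℕ))) * (((bvec n a t l).val : ℝ) / 2 ^ ((l:ℕ)+1)) := by
    intro k
    rw [Finset.sum_comm]
  rw [Finset.sum_congr rfl fun k _ => hswap k]
  have hterm : ∀ k l : Fin n, (∑ t : Fin n → ZMod 2,
        (((t k).val : ℝ) / 2 ^ (n - (k:ℕ))) * (((bvec n a t l).val : ℝ) / 2 ^ ((l:ℕ)+1)))
      = (2^n/4) * (((1:ℝ)/2^(n-(k:ℕ))) * ((1:ℝ)/2^((l:ℕ)+1)))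
        + (if k = l ∧ (if h : (l:ℕ) < n-1 then a ⟨l, h⟩ else 0) = 0 then (1:ℝ)/8 else 0) := by
    intro k l
    have hcomm : ∀ t : Fin n → ZMod 2,
        (((t k).val : ℝ) / 2 ^ (n - (k:ℕ))) * (((bvec n a t l).val : ℝ) / 2 ^ ((l:ℕ)+1))
        = (((t k).val : ℝ) * ((bvec n a t l).val : ℝ)) / (2 ^ (n - (k:ℕ)) * 2 ^ ((l:ℕ)+1)) :=
      fun t => div_mul_div_comm _ _ _ _
    rw [Finset.sum_congr rfl fun t _ => hcomm t, ← Finset.sum_div, Pkl]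
    by_cases hc : k = l ∧ (if h : (l:ℕ) < n-1 then a ⟨l, h⟩ else 0) = 0
    · rw [if_pos hc, if_pos hc]
      obtain ⟨rfl, -⟩ := hc
      have h2 : (2:ℝ) ^ (n - (k:ℕ)) * 2 ^ ((k:ℕ)+1) = 2 ^ (n+1) := by
        rw [← pow_add]
        congr 1
        have := k.isLt
        omega
      rw [h2, pow_succ]
      have hpos : (0:ℝ) < 2^n := by positivity
      have h3 : (2:ℝ) ^ (n - (k:ℕ)) * 2 ^ (k:ℕ) = 2 ^ n := by
        rw [← pow_add]
        congr 1
        have := k.isLt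
        omega
      have h4 : (2:ℝ) ^ (n*2) = 2^n * 2^n := by
        rw [pow_mul]
        ring
      field_simp
      linear_combination 16 * h3 + 64 * h4
    · rw [if_neg hc, if_neg hc, add_zero, add_zero]
      have hp1 : (0:ℝ) < 2 ^ (n - (k:ℕ)) := by positivity
      have hp2 : (0:ℝ) < 2 ^ ((l:ℕ)+1) := by positivity
      field_simp
  rw [Finset.sum_congr rfl fun k _ => Finset.sum_congr rfl fun l _ => hterm k l]
  have hsplit : ∀ k : Fin n, (∑ l : Fin n,
        ((2^n/4) * (((1:ℝ)/2^(n-(k:ℕ))) * ((1:ℝ)/2^((l:ℕ)+1)))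
          + (if k = l ∧ (if h : (l:ℕ) < n-1 then a ⟨l, h⟩ else 0) = 0 then (1:ℝ)/8 else 0)))
      = (2^n/4) * (((1:ℝ)/2^(n-(k:ℕ))) * (1 - 1/2^n))
        + (if (if h : (k:ℕ) < n-1 then a ⟨k, h⟩ else 0) = 0 then (1:ℝ)/8 else 0) := by
    intro k
    rw [Finset.sum_add_distrib]
    congr 1
    · rw [← Finset.mul_sum, ← Finset.mul_sum, sum_u]
    · have hite : ∀ l : Fin n,
          (if k = l ∧ (if h : (l:ℕ) < n-1 then a ⟨l, h⟩ else 0) = 0 then (1:ℝ)/8 else 0)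
          = (if k = l then (if (if h : (l:ℕ) < n-1 then a ⟨l, h⟩ else 0) = 0
              then (1:ℝ)/8 else 0) else 0) := by
        intro l
        by_cases h1 : k = l <;> by_cases h2 : (if h : (l:ℕ) < n-1 then a ⟨l, h⟩ else 0) = 0 <;>
          simp [h1, h2]
      rw [Finset.sum_congr rfl fun l _ => hite l, Finset.sum_ite_eq]
      simp
  rw [Finset.sum_congr rfl fun k _ => hsplit k, Finset.sum_add_distrib]
  congr 1
  · have hre : ∀ k : Fin n, (2:ℝ)^n/4 * ((1/2^(n-(k:ℕ))) * (1 - 1/2^n))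
        = ((2:ℝ)^n/4 * (1 - 1/2^n)) * (1/2^(n-(k:ℕ))) := fun k => by ring
    rw [Finset.sum_congr rfl fun k _ => hre k, ← Finset.mul_sum, sum_w]
    ring
  · rw [Finset.sum_div]
    refine Finset.sum_congr rfl fun k _ => ?_
    by_cases h : (if h : (k:ℕ) < n-1 then a ⟨k, h⟩ else 0) = 0 <;> simp [h]

lemma countA (n : ℕ) (hn : 1 ≤ n) (a : Fin (n-1) → ZMod 2) :
    ∑ l : Fin n, (if (if h : (l:ℕ) < n-1 then a ⟨l, h⟩ else 0) = 0 then (1:ℝ) else 0)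
      = ((Finset.univ.filter (fun i : Fin (n-1) => a i = 0)).card : ℝ) + 1 := by
  obtain ⟨m, rfl⟩ : ∃ m, n = m + 1 := ⟨n - 1, by omega⟩
  rw [Fin.sum_univ_castSucc]
  have hlast : (if h : ((Fin.last m : Fin (m+1)) : ℕ) < m + 1 - 1
      then a ⟨(Fin.last m : Fin (m+1)), h⟩ else 0) = 0 := by
    apply dif_neg
    simp
  rw [hlast]
  have h1 : ∀ i : Fin m,
      (if (if h : ((Fin.castSucc i : Fin (m+1)) : ℕ) < m + 1 - 1
          then a ⟨(Fin.castSucc i : Fin (m+1)), h⟩ else 0) = 0 then (1:ℝ) else 0)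
      = (if a i = 0 then (1:ℝ) else 0) := by
    intro i
    have hi : ((Fin.castSucc i : Fin (m+1)) : ℕ) < m + 1 - 1 := by
      simpa using i.isLt
    rw [dif_pos hi]
    have ha : a ⟨((Fin.castSucc i : Fin (m+1)) : ℕ), hi⟩ = a i := by
      congr 1
    rw [ha]
  rw [Finset.sum_congr rfl fun i _ => h1 i]
  have h2 : ((Finset.univ.filter (fun i : Fin (m+1-1) => a i = 0)).card : ℝ)
      = ∑ i : Fin m, (if a i = 0 then (1:ℝ) else 0) := by
    rw [Finset.card_filter]
    push_cast
    refine Finset.sum_congr rfl fun i _ => ?_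
    by_cases h : a i = 0 <;> simp [h]
  rw [h2]
  simp
theorem stmt5 (n : ℕ) (hn : 1 ≤ n) (a : Fin (n-1) → ZMod 2) :
    (∫ t₁ in (0:ℝ)..1, ∫ t₂ in (0:ℝ)..1,
        (((Finset.univ.filter
            (fun t : Fin n → ZMod 2 => xcoord n t < t₁ ∧ ycoord n a t < t₂)).card : ℝ) / 2 ^ n
          - t₁ * t₂))
      = (((Finset.univ.filter (fun i : Fin (n-1) => a i = 0)).card : ℝ) + 5) / 2 ^ (n + 3)
        + 1 / 2 ^ (2 * n + 2) := by
  rw [intervalIntegral.integral_congr (fun t₁ _ => inner_int n a t₁), outer_int n a]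
  have hsum : ∑ t : Fin n → ZMod 2, (1 - ycoord n a t) * (1 - xcoord n t)
      = (∑ _t : Fin n → ZMod 2, (1:ℝ)) - (∑ t : Fin n → ZMod 2, xcoord n t)
        - (∑ t : Fin n → ZMod 2, ycoord n a t)
        + ∑ t : Fin n → ZMod 2, xcoord n t * ycoord n a t := by
    refine (Finset.sum_congr rfl fun t _ => show (1 - ycoord n a t) * (1 - xcoord n t)
        = ((1 : ℝ) - xcoord n t - ycoord n a t) + xcoord n t * ycoord n a t from by
        ring).trans ?_
    rw [Finset.sum_add_distrib, Finset.sum_sub_distrib, Finset.sum_sub_distrib]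
  rw [hsum, card_fun2, sum_x, sum_y, sum_xy, countA n hn a]
  have hpos : (0:ℝ) < 2^n := by positivity
  have e1 : (2:ℝ)^(n+3) = 2^n * 8 := by rw [pow_add]; norm_num
  have e2 : (2:ℝ)^(2*n+2) = (2^n * 2^n) * 4 := by rw [pow_add, two_mul, pow_add]; norm_num
  rw [e1, e2]
  field_simp
  ring
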